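/- Let G be a finite simple graph on vertex set {1, …, n} with n ≥ 3 and at least one edge. If G is a disjoint union of complete graphs, then for d = 2 there is no d-truncated point module datum over the generalized Fomin–Kirillov algebra E_G; equivalently, E_G admits no 2-truncated point module. -/
import Mathlib


noncomputable section

open FreeAlgebra

/-- Index set for the generators `x_{ij}` (`i < j`) of the Fomin–Kirillov algebra `E_n`. -/
abbrev GenIdx (n : ℕ) := {p : Fin n × Fin n // p.1 < p.2}

/-- The defining relations of the Fomin–Kirillov algebra `E_n`. -/
inductive FKRel (k : Type*) [Field k] (n : ℕ) :
    FreeAlgebra k (GenIdx n) → FreeAlgebra k (GenIdx n) → Prop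
  | sq (e : GenIdx n) : FKRel k n (ι k e * ι k e) 0
  | comm (e f : GenIdx n) (h1 : e.1.1 ≠ f.1.1) (h2 : e.1.1 ≠ f.1.2)
      (h3 : e.1.2 ≠ f.1.1) (h4 : e.1.2 ≠ f.1.2) :
      FKRel k n (ι k e * ι k f - ι k f * ι k e) 0
  | tri1 (i j l : Fin n) (hij : i < j) (hjl : j < l) :
      FKRel k n (ι k ⟨(i, j), hij⟩ * ι k ⟨(j, l), hjl⟩ -
        ι k ⟨(j, l), hjl⟩ * ι k ⟨(i, l), hij.trans hjl⟩ -
        ι k ⟨(i, l), hij.trans hjl⟩ * ι k ⟨(i, j), hij⟩) 0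
  | tri2 (i j l : Fin n) (hij : i < j) (hjl : j < l) :
      FKRel k n (ι k ⟨(j, l), hjl⟩ * ι k ⟨(i, j), hij⟩ -
        ι k ⟨(i, l), hij.trans hjl⟩ * ι k ⟨(j, l), hjl⟩ -
        ι k ⟨(i, j), hij⟩ * ι k ⟨(i, l), hij.trans hjl⟩) 0

/-- The Fomin–Kirillov algebra `E_n` over `k`. -/
abbrev FK (k : Type*) [Field k] (n : ℕ) := RingQuot (FKRel k n)

/-- The generator `x_{ij}` of `E_n`. -/
def fkGen (k : Type*) [Field k] (n : ℕ) (e : GenIdx n) : FK k n :=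
  RingQuot.mkAlgHom k (FKRel k n) (ι k e)

/-- The edges of a simple graph `G` on `Fin n`, as generator indices of `E_n`. -/
abbrev EdgeIdx (n : ℕ) (G : SimpleGraph (Fin n)) := {e : GenIdx n // G.Adj e.1.1 e.1.2}

/-- The `(d+1) × (d+1)` matrix whose `(j+1, j)`-entry is `mu j` for `0 ≤ j ≤ d-1`
and whose other entries vanish. -/
def psiMat (k : Type*) [Field k] (d : ℕ) (mu : ℕ → k) :
    Matrix (Fin (d + 1)) (Fin (d + 1)) k :=
  Matrix.of fun p q => if (p : ℕ) = (q : ℕ) + 1 then mu q else 0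

/-- The natural algebra map from the free algebra on the edges of `G` to `E_n`,
sending `X_e` to `x_e`; its image is the generalized Fomin–Kirillov algebra `E_G`. -/
def toFK (k : Type*) [Field k] (n : ℕ) (G : SimpleGraph (Fin n)) :
    FreeAlgebra k (EdgeIdx n G) →ₐ[k] FK k n :=
  FreeAlgebra.lift k fun e => fkGen k n e.1

/-- The algebra map `ψ_λ` from the free algebra on the edges of `G` to matrices,
sending `X_e` to the matrix with `(j+1, j)`-entry `λ_e^j`. -/
def toMatrices (k : Type*) [Field k] (n d : ℕ) (G : SimpleGraph (Fin n))
    (lam : ℕ → EdgeIdx n G → k) :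
    FreeAlgebra k (EdgeIdx n G) →ₐ[k] Matrix (Fin (d + 1)) (Fin (d + 1)) k :=
  FreeAlgebra.lift k fun e => psiMat k d fun j => lam j e

/-- A `d`-truncated point module datum over the generalized Fomin–Kirillov algebra
`E_G ⊆ E_n`: scalars `λ_e^j` (`e` an edge of `G`, `0 ≤ j ≤ d-1`) such that each
vector `(λ_e^j)_e` is nonzero and `ψ_λ` annihilates the kernel of the natural map
from the free algebra on the edges of `G` to `E_n`. -/
def IsTPMDatum (k : Type*) [Field k] (n d : ℕ) (G : SimpleGraph (Fin n))
    (lam : ℕ → EdgeIdx n G → k) : Prop :=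
  (∀ j < d, ∃ e, lam j e ≠ 0) ∧
  ∀ a : FreeAlgebra k (EdgeIdx n G), toFK k n G a = 0 → toMatrices k n d G lam a = 0

section Helpers
variable {k : Type*} [Field k] {n : ℕ} {G : SimpleGraph (Fin n)} (lam : ℕ → EdgeIdx n G → k)

lemma entry20 (mu nu : ℕ → k) :
    (psiMat k 2 mu * psiMat k 2 nu) 2 0 = mu 1 * nu 0 := by
  simp [psiMat, Matrix.mul_apply, Fin.sum_univ_three]

lemma sq_rel (hker : ∀ a : FreeAlgebra k (EdgeIdx n G),
      toFK k n G a = 0 → toMatrices k n 2 G lam a = 0)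
    (e : EdgeIdx n G) : lam 1 e * lam 0 e = 0 := by
  have hz : toFK k n G (ι k e * ι k e) = 0 := by
    have h := RingQuot.mkAlgHom_rel k (FKRel.sq (k := k) (n := n) e.1)
    simp only [map_mul, map_zero] at h
    simp [toFK, fkGen, h]
  have hm := hker _ hz
  simp only [map_mul] at hm
  have : (toMatrices k n 2 G lam (ι k e) * toMatrices k n 2 G lam (ι k e)) 2 0 = 0 := by
    rw [hm]; rfl
  simpa [toMatrices, entry20] using this

lemma comm_rel (hker : ∀ a : FreeAlgebra k (EdgeIdx n G),
      toFK k n G a = 0 → toMatrices k n 2 G lam a = 0)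
    (e f : EdgeIdx n G) (h1 : e.1.1.1 ≠ f.1.1.1) (h2 : e.1.1.1 ≠ f.1.1.2)
    (h3 : e.1.1.2 ≠ f.1.1.1) (h4 : e.1.1.2 ≠ f.1.1.2) :
    lam 1 e * lam 0 f = lam 1 f * lam 0 e := by
  have hz : toFK k n G (ι k e * ι k f - ι k f * ι k e) = 0 := by
    have h := RingQuot.mkAlgHom_rel k (FKRel.comm (k := k) (n := n) e.1 f.1 h1 h2 h3 h4)
    simp only [map_sub, map_mul, map_zero] at h
    simp [toFK, fkGen, sub_eq_zero] at h ⊢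
    exact h
  have hm := hker _ hz
  simp only [map_sub, map_mul] at hm
  have h0 : (toMatrices k n 2 G lam (ι k e) * toMatrices k n 2 G lam (ι k f)
      - toMatrices k n 2 G lam (ι k f) * toMatrices k n 2 G lam (ι k e)) 2 0 = 0 := by
    rw [hm]; rfl
  rw [Matrix.sub_apply] at h0
  simp only [toMatrices, FreeAlgebra.lift_ι_apply] at h0
  rw [entry20, entry20] at h0
  exact sub_eq_zero.mp h0
end Helpers
section Tri
variable {k : Type*} [Field k] {n : ℕ} {G : SimpleGraph (Fin n)} (lam : ℕ → EdgeIdx n G → k)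

lemma tri1_rel (hker : ∀ a : FreeAlgebra k (EdgeIdx n G),
      toFK k n G a = 0 → toMatrices k n 2 G lam a = 0)
    (i j l : Fin n) (hij : i < j) (hjl : j < l)
    (hA : G.Adj i j) (hB : G.Adj j l) (hC : G.Adj i l) :
    lam 1 ⟨⟨(i, j), hij⟩, hA⟩ * lam 0 ⟨⟨(j, l), hjl⟩, hB⟩
      - lam 1 ⟨⟨(j, l), hjl⟩, hB⟩ * lam 0 ⟨⟨(i, l), hij.trans hjl⟩, hC⟩
      - lam 1 ⟨⟨(i, l), hij.trans hjl⟩, hC⟩ * lam 0 ⟨⟨(i, j), hij⟩, hA⟩ = 0 := by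
  set a : EdgeIdx n G := ⟨⟨(i, j), hij⟩, hA⟩
  set b : EdgeIdx n G := ⟨⟨(j, l), hjl⟩, hB⟩
  set c : EdgeIdx n G := ⟨⟨(i, l), hij.trans hjl⟩, hC⟩
  have hz : toFK k n G (ι k a * ι k b - ι k b * ι k c - ι k c * ι k a) = 0 := by
    have h := RingQuot.mkAlgHom_rel k (FKRel.tri1 (k := k) i j l hij hjl)
    simp only [map_sub, map_mul, map_zero] at h
    simp only [map_sub, map_mul, toFK, FreeAlgebra.lift_ι_apply, fkGen]
    exact h
  have hm := hker _ hz
  simp only [map_sub, map_mul] at hm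
  have h0 : ((toMatrices k n 2 G lam (ι k a) * toMatrices k n 2 G lam (ι k b)
      - toMatrices k n 2 G lam (ι k b) * toMatrices k n 2 G lam (ι k c))
      - toMatrices k n 2 G lam (ι k c) * toMatrices k n 2 G lam (ι k a)) 2 0 = 0 := by
    rw [hm]; rfl
  rw [Matrix.sub_apply, Matrix.sub_apply] at h0
  simp only [toMatrices, FreeAlgebra.lift_ι_apply] at h0
  rw [entry20, entry20, entry20] at h0
  exact h0

lemma tri2_rel (hker : ∀ a : FreeAlgebra k (EdgeIdx n G),
      toFK k n G a = 0 → toMatrices k n 2 G lam a = 0)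
    (i j l : Fin n) (hij : i < j) (hjl : j < l)
    (hA : G.Adj i j) (hB : G.Adj j l) (hC : G.Adj i l) :
    lam 1 ⟨⟨(j, l), hjl⟩, hB⟩ * lam 0 ⟨⟨(i, j), hij⟩, hA⟩
      - lam 1 ⟨⟨(i, l), hij.trans hjl⟩, hC⟩ * lam 0 ⟨⟨(j, l), hjl⟩, hB⟩
      - lam 1 ⟨⟨(i, j), hij⟩, hA⟩ * lam 0 ⟨⟨(i, l), hij.trans hjl⟩, hC⟩ = 0 := by
  set a : EdgeIdx n G := ⟨⟨(i, j), hij⟩, hA⟩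
  set b : EdgeIdx n G := ⟨⟨(j, l), hjl⟩, hB⟩
  set c : EdgeIdx n G := ⟨⟨(i, l), hij.trans hjl⟩, hC⟩
  have hz : toFK k n G (ι k b * ι k a - ι k c * ι k b - ι k a * ι k c) = 0 := by
    have h := RingQuot.mkAlgHom_rel k (FKRel.tri2 (k := k) i j l hij hjl)
    simp only [map_sub, map_mul, map_zero] at h
    simp only [map_sub, map_mul, toFK, FreeAlgebra.lift_ι_apply, fkGen]
    exact h
  have hm := hker _ hz
  simp only [map_sub, map_mul] at hm
  have h0 : ((toMatrices k n 2 G lam (ι k b) * toMatrices k n 2 G lam (ι k a)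
      - toMatrices k n 2 G lam (ι k c) * toMatrices k n 2 G lam (ι k b))
      - toMatrices k n 2 G lam (ι k a) * toMatrices k n 2 G lam (ι k c)) 2 0 = 0 := by
    rw [hm]; rfl
  rw [Matrix.sub_apply, Matrix.sub_apply] at h0
  simp only [toMatrices, FreeAlgebra.lift_ι_apply] at h0
  rw [entry20, entry20, entry20] at h0
  exact h0
end Tri
/-- If `G` (a graph on `{1,…,n}`, `n ≥ 3`, with at least one edge) is a disjoint union
of complete graphs (every two distinct vertices in the same connected component are
adjacent), then `E_G` admits no 2-truncated point module. -/
theorem no_two_truncated_point_module_of_disjoint_union_of_complete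
    (k : Type*) [Field k] [IsAlgClosed k] (n : ℕ) (hn : 3 ≤ n)
    (G : SimpleGraph (Fin n)) (hedge : ∃ a b, G.Adj a b)
    (hcomplete : ∀ a b : Fin n, G.Reachable a b → a ≠ b → G.Adj a b) :
    ¬ ∃ lam : ℕ → EdgeIdx n G → k, IsTPMDatum k n 2 G lam := by
  rintro ⟨lam, hnz, hker⟩
  obtain ⟨e, he⟩ := hnz 1 one_lt_two
  obtain ⟨f, hf⟩ := hnz 0 (by norm_num)
  have ue : lam 0 e = 0 := by
    rcases mul_eq_zero.mp (sq_rel lam hker e) with h | h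
    · exact absurd h he
    · exact h
  have vf : lam 1 f = 0 := by
    rcases mul_eq_zero.mp (sq_rel lam hker f) with h | h
    · exact h
    · exact absurd h hf
  obtain ⟨⟨⟨e1, e2⟩, helt⟩, hea⟩ := e
  obtain ⟨⟨⟨f1, f2⟩, hflt⟩, hfa⟩ := f
  have helt' : e1 < e2 := helt
  have hflt' : f1 < f2 := hflt
  have hea' : G.Adj e1 e2 := hea
  have hfa' : G.Adj f1 f2 := hfa
  by_cases h11 : e1 = f1
  · subst h11
    by_cases h22 : e2 = f2
    · subst h22; exact hf ue
    · have hadj : G.Adj e2 f2 :=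
        hcomplete _ _ ((hea'.symm.reachable).trans hfa'.reachable) h22
      rcases lt_or_gt_of_ne h22 with hlt | hgt
      · -- e1 < e2 < f2 : e = a, f = c
        have h := tri2_rel lam hker e1 e2 f2 helt' hlt hea' hadj hfa'
        have vf' : lam 1 (⟨⟨(e1, f2), helt'.trans hlt⟩, hfa'⟩ : EdgeIdx n G) = 0 := vf
        have ue' : lam 0 (⟨⟨(e1, e2), helt'⟩, hea'⟩ : EdgeIdx n G) = 0 := ue
        rw [ue', vf'] at h
        simp only [zero_mul, mul_zero, sub_zero, zero_sub, neg_zero, neg_eq_zero] at h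
        rcases mul_eq_zero.mp h with h | h
        · exact he h
        · exact hf h
      · -- e1 < f2 < e2 : f = a, e = c
        have h := tri1_rel lam hker e1 f2 e2 hflt' hgt hfa' hadj.symm hea'
        have vf' : lam 1 (⟨⟨(e1, f2), hflt'⟩, hfa'⟩ : EdgeIdx n G) = 0 := vf
        have ue' : lam 0 (⟨⟨(e1, e2), hflt'.trans hgt⟩, hea'⟩ : EdgeIdx n G) = 0 := ue
        rw [ue', vf'] at h
        simp only [zero_mul, mul_zero, sub_zero, zero_sub, neg_zero, neg_eq_zero] at h
        rcases mul_eq_zero.mp h with h | h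
        · exact he h
        · exact hf h
  · by_cases h22 : e2 = f2
    · subst h22
      have hadj : G.Adj e1 f1 :=
        hcomplete _ _ ((hea'.reachable).trans hfa'.symm.reachable) h11
      rcases lt_or_gt_of_ne h11 with hlt | hgt
      · -- e1 < f1 < e2 : f = b, e = c
        have h := tri2_rel lam hker e1 f1 e2 hlt hflt' hadj hfa' hea'
        have vf' : lam 1 (⟨⟨(f1, e2), hflt'⟩, hfa'⟩ : EdgeIdx n G) = 0 := vf
        have ue' : lam 0 (⟨⟨(e1, e2), hlt.trans hflt'⟩, hea'⟩ : EdgeIdx n G) = 0 := ue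
        rw [ue', vf'] at h
        simp only [zero_mul, mul_zero, sub_zero, zero_sub, neg_zero, neg_eq_zero] at h
        rcases mul_eq_zero.mp h with h | h
        · exact he h
        · exact hf h
      · -- f1 < e1 < e2 : e = b, f = c
        have h := tri1_rel lam hker f1 e1 e2 hgt helt' hadj.symm hea' hfa'
        have vf' : lam 1 (⟨⟨(f1, e2), hgt.trans helt'⟩, hfa'⟩ : EdgeIdx n G) = 0 := vf
        have ue' : lam 0 (⟨⟨(e1, e2), helt'⟩, hea'⟩ : EdgeIdx n G) = 0 := ue
        rw [ue', vf'] at h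
        simp only [zero_mul, mul_zero, sub_zero, zero_sub, neg_zero, neg_eq_zero] at h
        rcases mul_eq_zero.mp h with h | h
        · exact he h
        · exact hf h
    · by_cases h12 : e1 = f2
      · subst h12
        -- f1 < e1 < e2 : f = a, e = b
        have hadj : G.Adj f1 e2 :=
          hcomplete _ _ ((hfa'.reachable).trans hea'.reachable)
            (ne_of_lt (hflt'.trans helt'))
        have h := tri2_rel lam hker f1 e1 e2 hflt' helt' hfa' hea' hadj
        have vf' : lam 1 (⟨⟨(f1, e1), hflt'⟩, hfa'⟩ : EdgeIdx n G) = 0 := vf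
        have ue' : lam 0 (⟨⟨(e1, e2), helt'⟩, hea'⟩ : EdgeIdx n G) = 0 := ue
        rw [ue', vf'] at h
        simp only [zero_mul, mul_zero, sub_zero, zero_sub, neg_zero, neg_eq_zero] at h
        rcases mul_eq_zero.mp h with h | h
        · exact he h
        · exact hf h
      · by_cases h21 : e2 = f1
        · subst h21
          -- e1 < e2 < f2 : e = a, f = b
          have hadj : G.Adj e1 f2 :=
            hcomplete _ _ ((hea'.reachable).trans hfa'.reachable)
              (ne_of_lt (helt'.trans hflt'))
          have h := tri1_rel lam hker e1 e2 f2 helt' hflt' hea' hfa' hadj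
          have vf' : lam 1 (⟨⟨(e2, f2), hflt'⟩, hfa'⟩ : EdgeIdx n G) = 0 := vf
          have ue' : lam 0 (⟨⟨(e1, e2), helt'⟩, hea'⟩ : EdgeIdx n G) = 0 := ue
          rw [ue', vf'] at h
          simp only [zero_mul, mul_zero, sub_zero, zero_sub, neg_zero, neg_eq_zero] at h
          rcases mul_eq_zero.mp h with h | h
          · exact he h
          · exact hf h
        · -- disjoint edges
          have h := comm_rel lam hker ⟨⟨(e1, e2), helt⟩, hea⟩ ⟨⟨(f1, f2), hflt⟩, hfa⟩
            h11 h12 h21 h22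
          have vf' : lam 1 (⟨⟨(f1, f2), hflt⟩, hfa⟩ : EdgeIdx n G) = 0 := vf
          rw [vf', zero_mul] at h
          rcases mul_eq_zero.mp h with h | h
          · exact he h
          · exact hf h
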